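/- Let ℋ be a finite-dimensional complex Hilbert space, s ∈ [0,1), and let S₀ ⊆ S(ℋ) be a convex, s-perturbed Δ-invariant subset containing more than one element. Let f : S₀ → ℝ be an ALAFF function with associated functions a_f, b_f; set E_f = a_f + b_f and E_f^max(p) = (1−p)·max{E_f(t)/(1−t) : 0 ≤ t ≤ p} for p ∈ [0,1). Assume C := sup{|f(ρ)−f(σ)| : ρ, σ ∈ S₀, (1/2)‖ρ−σ‖₁ = 1−s} < +∞. Then for every ε ∈ (0,1] and all ρ, σ ∈ S₀ with (1/2)‖ρ−σ‖₁ ≤ ε, one has |f(ρ) − f(σ)| ≤ C·ε/(1−s) + ((1−s+ε)/(1−s))·E_f^max(ε/(1−s+ε)); in particular, f is uniformly continuous on S₀. -/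

import Mathlib

open Matrix MeasureTheory
open scoped Kronecker Classical ComplexOrder

noncomputable section

namespace QPaper

variable {n : Type*}

/-- A quantum state: positive semidefinite matrix with trace one. -/
def IsState [Fintype n] (ρ : Matrix n n ℂ) : Prop :=
  ρ.PosSemidef ∧ ρ.trace = 1

/-- The trace norm of a matrix: `tr √(XᴴX)`. -/
noncomputable def traceNorm [Fintype n] [DecidableEq n] (X : Matrix n n ℂ) : ℝ :=
  (((Matrix.posSemidef_conjTranspose_mul_self X).1.eigenvectorUnitary : Matrix n n ℂ) *
      Matrix.diagonal ((fun x : ℝ => (x : ℂ)) ∘ (√·) ∘ (Matrix.posSemidef_conjTranspose_mul_self X).1.eigenvalues) *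
      star ((Matrix.posSemidef_conjTranspose_mul_self X).1.eigenvectorUnitary : Matrix n n ℂ)).trace.re

/-- Functional calculus for Hermitian matrices: apply `f` to the eigenvalues. -/
noncomputable def matFun [Fintype n] [DecidableEq n] (f : ℝ → ℂ) (A : Matrix n n ℂ) :
    Matrix n n ℂ :=
  if hA : A.IsHermitian then
    (hA.eigenvectorUnitary : Matrix n n ℂ) *
      Matrix.diagonal (fun i => f (hA.eigenvalues i)) *
        (hA.eigenvectorUnitary : Matrix n n ℂ)ᴴ
  else 0

/-- Matrix logarithm on the support (0 ↦ 0). -/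
noncomputable def mlog [Fintype n] [DecidableEq n] (A : Matrix n n ℂ) : Matrix n n ℂ :=
  matFun (fun x => (Real.log x : ℂ)) A

/-- Real matrix powers on the support (Moore-Penrose style, 0 ↦ 0 for r ≠ 0). -/
noncomputable def mpow [Fintype n] [DecidableEq n] (A : Matrix n n ℂ) (r : ℝ) : Matrix n n ℂ :=
  matFun (fun x => ((x ^ r : ℝ) : ℂ)) A

/-- Complex matrix powers on the support (0 ↦ 0). -/
noncomputable def mcpow [Fintype n] [DecidableEq n] (A : Matrix n n ℂ) (z : ℂ) : Matrix n n ℂ :=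
  matFun (fun x => if x = 0 then 0 else (x : ℂ) ^ z) A

/-- The matrix `A log A`, functional calculus for `x ↦ x log x` (0 ↦ 0). -/
noncomputable def mXLogX [Fintype n] [DecidableEq n] (A : Matrix n n ℂ) : Matrix n n ℂ :=
  matFun (fun x => ((x * Real.log x : ℝ) : ℂ)) A

/-- Umegaki relative entropy `D(ρ‖K) = tr[ρ (log ρ - log K)]`. -/
noncomputable def relEnt [Fintype n] [DecidableEq n] (ρ K : Matrix n n ℂ) : ℝ :=
  ((ρ * (mlog ρ - mlog K)).trace).re

/-- Belavkin–Staszewski entropy `D̂(ρ‖K) = tr[ρ log(ρ^{1/2} K⁻¹ ρ^{1/2})]`. -/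
noncomputable def bsEnt [Fintype n] [DecidableEq n] (ρ K : Matrix n n ℂ) : ℝ :=
  ((ρ * mlog (mpow ρ (1/2) * mpow K (-1) * mpow ρ (1/2))).trace).re

/-- von Neumann entropy. -/
noncomputable def vnEnt [Fintype n] [DecidableEq n] (ρ : Matrix n n ℂ) : ℝ :=
  -(((ρ * mlog ρ).trace).re)

/-- Operator norm of a matrix. -/
noncomputable def opNorm [Fintype n] [DecidableEq n] (X : Matrix n n ℂ) : ℝ :=
  ‖Matrix.toEuclideanCLM (𝕜 := ℂ) X‖

/-- `ker K ⊆ ker ρ`. -/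
def kerLE [Fintype n] (K ρ : Matrix n n ℂ) : Prop :=
  ∀ v : n → ℂ, K.mulVec v = 0 → ρ.mulVec v = 0

/-- partial trace over the first factor. -/
noncomputable def ptrA {a b : Type*} [Fintype a] (ρ : Matrix (a × b) (a × b) ℂ) :
    Matrix b b ℂ :=
  Matrix.of fun i j => ∑ x : a, ρ (x, i) (x, j)

/-- partial trace over the second factor. -/
noncomputable def ptrB {a b : Type*} [Fintype b] (ρ : Matrix (a × b) (a × b) ℂ) :
    Matrix a a ℂ :=
  Matrix.of fun i j => ∑ x : b, ρ (i, x) (j, x)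

/-- partial trace over the middle factor of a tripartite system. -/
noncomputable def ptrMid {a b c : Type*} [Fintype b]
    (ρ : Matrix (a × b × c) (a × b × c) ℂ) : Matrix (a × c) (a × c) ℂ :=
  Matrix.of fun p q => ∑ y : b, ρ (p.1, y, p.2) (q.1, y, q.2)

/-- Conditional entropy `H_ρ(A|B) = S(ρ_{AB}) - S(ρ_B)`. -/
noncomputable def condEnt {a b : Type*} [Fintype a] [Fintype b] [DecidableEq a] [DecidableEq b]
    (ρ : Matrix (a × b) (a × b) ℂ) : ℝ :=
  vnEnt ρ - vnEnt (ptrA ρ)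

/-- Mutual information `I_ρ(A:B) = S(ρ_A) + S(ρ_B) - S(ρ_{AB})`. -/
noncomputable def mutInfo {a b : Type*} [Fintype a] [Fintype b] [DecidableEq a] [DecidableEq b]
    (ρ : Matrix (a × b) (a × b) ℂ) : ℝ :=
  vnEnt (ptrB ρ) + vnEnt (ptrA ρ) - vnEnt ρ

/-- Conditional mutual information `I_ρ(A:B|C)`. -/
noncomputable def condMutInfo {a b c : Type*} [Fintype a] [Fintype b] [Fintype c]
    [DecidableEq a] [DecidableEq b] [DecidableEq c]
    (ρ : Matrix (a × b × c) (a × b × c) ℂ) : ℝ :=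
  vnEnt (ptrMid ρ) + vnEnt (ptrA ρ) - vnEnt (ptrA (ptrA ρ)) - vnEnt ρ

/-- BS-conditional entropy `Ĥ_ρ(A|B) = -D̂(ρ ‖ 𝟙_A ⊗ ρ_B)`. -/
noncomputable def bsCondEnt {a b : Type*} [Fintype a] [Fintype b] [DecidableEq a] [DecidableEq b]
    (ρ : Matrix (a × b) (a × b) ℂ) : ℝ :=
  -(bsEnt ρ ((1 : Matrix a a ℂ) ⊗ₖ ptrA ρ))

/-- BS-mutual information `Î_ρ(A:B) = D̂(ρ ‖ ρ_A ⊗ ρ_B)`. -/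
noncomputable def bsMutInfo {a b : Type*} [Fintype a] [Fintype b] [DecidableEq a] [DecidableEq b]
    (ρ : Matrix (a × b) (a × b) ℂ) : ℝ :=
  bsEnt ρ (ptrB ρ ⊗ₖ ptrA ρ)

/-- BS-conditional mutual information `Î_ρ(A:B|C) = Ĥ_ρ(A|C) - Ĥ_ρ(A|BC)`. -/
noncomputable def bsCondMutInfo {a b c : Type*} [Fintype a] [Fintype b] [Fintype c]
    [DecidableEq a] [DecidableEq b] [DecidableEq c]
    (ρ : Matrix (a × b × c) (a × b × c) ℂ) : ℝ :=
  bsCondEnt (ptrMid ρ) - bsCondEnt (a := a) (b := b × c) ρ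

/-- Binary entropy. -/
noncomputable def binEnt (p : ℝ) : ℝ :=
  -(p * Real.log p) - (1 - p) * Real.log (1 - p)

/-- The function `f_{c₁,c₂}`. -/
noncomputable def fcc (c₁ c₂ p : ℝ) : ℝ :=
  p * Real.log (p + (1 - p) * c₁) + (1 - p) * Real.log ((1 - p) + p * c₂)

/-- The probability density `β₀`. -/
noncomputable def beta0 (t : ℝ) : ℝ :=
  (Real.pi / 2) * (Real.cosh (Real.pi * t) + 1)⁻¹


/-- Spectral positive part of a Hermitian matrix. -/
noncomputable def posPart' [Fintype n] [DecidableEq n] (X : Matrix n n ℂ) : Matrix n n ℂ :=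
  matFun (fun x => ((max x 0 : ℝ) : ℂ)) X

/-- Spectral negative part of a Hermitian matrix. -/
noncomputable def negPart' [Fintype n] [DecidableEq n] (X : Matrix n n ℂ) : Matrix n n ℂ :=
  matFun (fun x => ((max (-x) 0 : ℝ) : ℂ)) X

/-- `s`-perturbed Δ-invariance of a set of states. -/
def PerturbedDeltaInvariant {d : ℕ} (s : ℝ) (S₀ : Set (Matrix (Fin d) (Fin d) ℂ)) : Prop :=
  ∀ ρ ∈ S₀, ∀ σ ∈ S₀, ρ ≠ σ → ∃ τ : Matrix (Fin d) (Fin d) ℂ, IsState τ ∧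
    (s • τ + ((1 - s) / ((1/2) * traceNorm (ρ - σ))) • posPart' (ρ - σ) ∈ S₀) ∧
    (s • τ + ((1 - s) / ((1/2) * traceNorm (ρ - σ))) • negPart' (ρ - σ) ∈ S₀)

/-- `E_f^max`. -/
noncomputable def Emax (E : ℝ → ℝ) (p : ℝ) : ℝ :=
  (1 - p) * sSup ((fun t => E t / (1 - t)) '' Set.Icc 0 p)

section Helpers
variable {m : Type*} [Fintype m] [DecidableEq m]

lemma trace_conj_unitary (U : Matrix.unitaryGroup m ℂ) (D : Matrix m m ℂ) :
    ((U : Matrix m m ℂ) * D * (star U : Matrix m m ℂ)).trace = D.trace := by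
  rw [Matrix.trace_mul_cycle, Matrix.UnitaryGroup.star_mul_self, Matrix.one_mul]

lemma matFun_eq {A : Matrix m m ℂ} (hA : A.IsHermitian) (f : ℝ → ℂ) :
    matFun f A = (hA.eigenvectorUnitary : Matrix m m ℂ) *
      Matrix.diagonal (fun i => f (hA.eigenvalues i)) *
        (hA.eigenvectorUnitary : Matrix m m ℂ)ᴴ := by
  rw [matFun, dif_pos hA]

lemma posPart_sub_negPart {A : Matrix m m ℂ} (hA : A.IsHermitian) :
    posPart' A - negPart' A = A := by
  rw [posPart', negPart', matFun_eq hA, matFun_eq hA, ← Matrix.sub_mul, ← Matrix.mul_sub]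
  have hd : Matrix.diagonal (fun i => ((max (hA.eigenvalues i) 0 : ℝ) : ℂ)) -
      Matrix.diagonal (fun i => ((max (-(hA.eigenvalues i)) 0 : ℝ) : ℂ)) =
      Matrix.diagonal (RCLike.ofReal ∘ hA.eigenvalues) := by
    ext i j
    by_cases hij : i = j
    · subst hij
      simp only [Matrix.sub_apply, Matrix.diagonal_apply_eq, Function.comp_apply]
      rw [← Complex.ofReal_sub, max_zero_sub_max_neg_zero_eq_self]
      rfl
    · simp [Matrix.diagonal_apply_ne _ hij]
  rw [hd]
  conv_rhs => rw [hA.spectral_theorem]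
  rfl

lemma traceNorm_eq_sum (X : Matrix m m ℂ) :
    traceNorm X =
      ∑ i, Real.sqrt ((Matrix.posSemidef_conjTranspose_mul_self X).1.eigenvalues i) := by
  rw [traceNorm]
  rw [Matrix.trace_mul_cycle, Matrix.UnitaryGroup.star_mul_self, Matrix.one_mul,
    Matrix.trace_diagonal]
  rw [Complex.re_sum]
  simp

lemma traceNorm_nonneg' (X : Matrix m m ℂ) : 0 ≤ traceNorm X := by
  rw [traceNorm_eq_sum]
  exact Finset.sum_nonneg fun i _ => Real.sqrt_nonneg _

lemma traceNorm_pos {X : Matrix m m ℂ} (hX : X ≠ 0) : 0 < traceNorm X := by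
  rcases (traceNorm_nonneg' X).lt_or_eq with h | h
  · exact h
  exfalso
  apply hX
  have hP := Matrix.posSemidef_conjTranspose_mul_self X
  have hz : ∀ i, hP.1.eigenvalues i = 0 := by
    intro i
    have hsum := h.symm
    rw [traceNorm_eq_sum] at hsum
    have h0 : Real.sqrt (hP.1.eigenvalues i) = 0 :=
      (Finset.sum_eq_zero_iff_of_nonneg (fun j _ => Real.sqrt_nonneg _)).mp hsum i
        (Finset.mem_univ i)
    have := hP.eigenvalues_nonneg i
    nlinarith [Real.sq_sqrt this, h0]
  have hXX : Xᴴ * X = 0 := by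
    have := hP.1.spectral_theorem
    rw [this]
    have : Matrix.diagonal (RCLike.ofReal ∘ hP.1.eigenvalues) = (0 : Matrix m m ℂ) := by
      ext i j
      by_cases hij : i = j <;> simp [Matrix.diagonal, hij, hz]
    rw [this, map_zero]
  exact Matrix.conjTranspose_mul_self_eq_zero.mp hXX

lemma posSemidef_smul_real {A : Matrix m m ℂ} (hA : A.PosSemidef) {c : ℝ} (hc : 0 ≤ c) :
    (c • A).PosSemidef := by
  exact hA.smul hc

lemma sqrt_congr {A B : Matrix m m ℂ} (h : A = B) (hA : A.PosSemidef) (hB : B.PosSemidef) :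
    hA.1.cfc Real.sqrt = hB.1.cfc Real.sqrt := by subst h; rfl

lemma traceNorm_smul (c : ℝ) (hc : 0 ≤ c) (X : Matrix m m ℂ) :
    traceNorm (c • X) = c * traceNorm X := by
  have key : (c • X)ᴴ * (c • X) = (c * c) • (Xᴴ * X) := by
    rw [Matrix.conjTranspose_smul, star_trivial, Matrix.smul_mul, Matrix.mul_smul, smul_smul]
  have hP := Matrix.posSemidef_conjTranspose_mul_self X
  have hQ : ((c * c) • (Xᴴ * X)).PosSemidef := key ▸ Matrix.posSemidef_conjTranspose_mul_self
    (c • X)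
  have hsq : hQ.1.cfc Real.sqrt = c • hP.1.cfc Real.sqrt := by
    rw [← hQ.1.cfc_eq, ← hP.1.cfc_eq, ← cfc_comp_const_mul (c * c) Real.sqrt (Xᴴ * X)
      (ha := hP.1.isSelfAdjoint), ← cfc_const_mul c Real.sqrt (Xᴴ * X)]
    apply cfc_congr
    intro x hx
    rw [hP.1.spectrum_real_eq_range_eigenvalues] at hx
    obtain ⟨i, rfl⟩ := hx
    have := hP.eigenvalues_nonneg i
    beta_reduce
    rw [Real.sqrt_mul (mul_self_nonneg c), Real.sqrt_mul_self hc]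
  have e1 : traceNorm (c • X) =
      ((Matrix.posSemidef_conjTranspose_mul_self (c • X)).1.cfc Real.sqrt).trace.re := rfl
  have e2 : traceNorm X = (hP.1.cfc Real.sqrt).trace.re := rfl
  rw [e1, e2, sqrt_congr key (Matrix.posSemidef_conjTranspose_mul_self (c • X)) hQ, hsq,
    Matrix.trace_smul]
  simp [Complex.real_smul]

end Helpers

set_option maxHeartbeats 1000000 in
/-- **The ALAFF method**. -/
theorem alaff_method {d : ℕ} (s : ℝ) (hs0 : 0 ≤ s) (hs1 : s < 1)
    (S₀ : Set (Matrix (Fin d) (Fin d) ℂ))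
    (hS₀state : ∀ ρ ∈ S₀, IsState ρ)
    (hconv : Convex ℝ S₀)
    (hinv : PerturbedDeltaInvariant s S₀)
    (htwo : ∃ ρ ∈ S₀, ∃ σ ∈ S₀, ρ ≠ σ)
    (f : Matrix (Fin d) (Fin d) ℂ → ℝ) (a b : ℝ → ℝ)
    (ha0 : a 0 = 0) (hb0 : b 0 = 0)
    (haC : ContinuousOn a (Set.Icc 0 1)) (hbC : ContinuousOn b (Set.Icc 0 1))
    (haM : MonotoneOn a (Set.Icc 0 (1/2))) (hbM : MonotoneOn b (Set.Icc 0 (1/2)))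
    (halaff : ∀ p ∈ Set.Icc (0:ℝ) 1, ∀ ρ ∈ S₀, ∀ σ ∈ S₀,
      -(a p) ≤ f (p • ρ + (1 - p) • σ) - p * f ρ - (1 - p) * f σ ∧
      f (p • ρ + (1 - p) • σ) - p * f ρ - (1 - p) * f σ ≤ b p)
    (C : ℝ)
    (hC : ∀ ρ ∈ S₀, ∀ σ ∈ S₀, (1/2) * traceNorm (ρ - σ) = 1 - s → |f ρ - f σ| ≤ C) :
    (∀ ε : ℝ, 0 < ε → ε ≤ 1 → ∀ ρ ∈ S₀, ∀ σ ∈ S₀, (1/2) * traceNorm (ρ - σ) ≤ ε →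
      |f ρ - f σ| ≤ C * ε / (1 - s) +
        ((1 - s + ε) / (1 - s)) * Emax (fun t => a t + b t) (ε / (1 - s + ε))) ∧
    (∀ δ : ℝ, 0 < δ → ∃ η : ℝ, 0 < η ∧ ∀ ρ ∈ S₀, ∀ σ ∈ S₀,
      traceNorm (ρ - σ) < η → |f ρ - f σ| < δ) := by
  have hs' : (0:ℝ) < 1 - s := by linarith
  -- the basic construction from perturbed Δ-invariance
  have construct : ∀ ρ ∈ S₀, ∀ σ ∈ S₀, ρ ≠ σ →
      ∃ σp ∈ S₀, ∃ σm ∈ S₀,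
        σp - σm = ((1 - s) / ((1/2) * traceNorm (ρ - σ))) • (ρ - σ) ∧
        (1/2) * traceNorm (σp - σm) = 1 - s := by
    intro ρ hρ σ hσ hne
    obtain ⟨τ, hτ, hpmem, hnmem⟩ := hinv ρ hρ σ hσ hne
    have hε'pos : 0 < (1/2) * traceNorm (ρ - σ) := by
      have := traceNorm_pos (X := ρ - σ) (sub_ne_zero.mpr hne)
      linarith
    set ε' := (1/2) * traceNorm (ρ - σ) with hε'def
    set k := (1 - s) / ε' with hkdef
    have hk : 0 ≤ k := le_of_lt (div_pos hs' hε'pos)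
    have hH : (ρ - σ).IsHermitian := ((hS₀state ρ hρ).1.1.sub (hS₀state σ hσ).1.1)
    refine ⟨_, hpmem, _, hnmem, ?_, ?_⟩
    · rw [add_sub_add_left_eq_sub, ← smul_sub, posPart_sub_negPart hH]
    · rw [add_sub_add_left_eq_sub, ← smul_sub, posPart_sub_negPart hH,
        traceNorm_smul k hk, hkdef]
      have h9 : (1:ℝ)/2 * ((1 - s) / ε' * traceNorm (ρ - σ)) = (1 - s) / ε' * ε' := by
        rw [hε'def]; ring
      rw [h9, div_mul_cancel₀ _ (ne_of_gt hε'pos)]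
  obtain ⟨ρ₀, hρ₀, σ₀, hσ₀, hne₀⟩ := htwo
  obtain ⟨σp₀, hσp₀, σm₀, hσm₀, -, hdist₀⟩ := construct ρ₀ hρ₀ σ₀ hσ₀ hne₀
  have hC0 : 0 ≤ C := (abs_nonneg _).trans (hC _ hσp₀ _ hσm₀ hdist₀)
  -- the simplification of the Emax term
  have hEmaxgen : ∀ ε : ℝ, 0 < ε →
      ((1 - s + ε) / (1 - s)) * Emax (fun t => a t + b t) (ε / (1 - s + ε)) =
        sSup ((fun t => (a t + b t) / (1 - t)) '' Set.Icc 0 (ε / (1 - s + ε))) := by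
    intro ε hε
    have hsε : 0 < 1 - s + ε := by linarith
    have h1pε : 1 - ε / (1 - s + ε) = (1 - s) / (1 - s + ε) := by field_simp; ring
    have hone : (1 - s + ε) / (1 - s) * ((1 - s) / (1 - s + ε)) = 1 := by
      field_simp
    rw [Emax, h1pε, ← mul_assoc, hone, one_mul]
  -- Part 1
  have main : ∀ ε : ℝ, 0 < ε → ε ≤ 1 → ∀ ρ ∈ S₀, ∀ σ ∈ S₀, (1/2) * traceNorm (ρ - σ) ≤ ε →
      |f ρ - f σ| ≤ C * ε / (1 - s) +
        ((1 - s + ε) / (1 - s)) * Emax (fun t => a t + b t) (ε / (1 - s + ε)) := by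
    intro ε hε hε1 ρ hρ σ hσ hεle
    have hsε : 0 < 1 - s + ε := by linarith
    rw [hEmaxgen ε hε]
    set pε := ε / (1 - s + ε) with hpεdef
    have hpε0 : 0 ≤ pε := le_of_lt (div_pos hε hsε)
    have hpε1 : pε < 1 := by rw [hpεdef, div_lt_one hsε]; linarith
    set S := (fun t => (a t + b t) / (1 - t)) '' Set.Icc 0 pε with hSdef
    have hgcont : ContinuousOn (fun t => (a t + b t) / (1 - t)) (Set.Icc 0 pε) := by
      have hsub : Set.Icc (0:ℝ) pε ⊆ Set.Icc 0 1 := Set.Icc_subset_Icc le_rfl (le_of_lt hpε1)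
      exact ((haC.mono hsub).add (hbC.mono hsub)).div
        (continuousOn_const.sub continuousOn_id)
        (fun t ht => by intro h; have := ht.2; linarith)
    have hbdd : BddAbove S := (isCompact_Icc.image_of_continuousOn hgcont).bddAbove
    have hzero_mem : (0:ℝ) ∈ S := ⟨0, ⟨le_rfl, hpε0⟩, by simp [ha0, hb0]⟩
    have hsup0 : 0 ≤ sSup S := le_csSup hbdd hzero_mem
    by_cases hne : ρ = σ
    · subst hne
      simp only [sub_self, abs_zero]
      have : 0 ≤ C * ε / (1 - s) := by positivity
      linarith
    · obtain ⟨σp, hσpm, σm, hσmm, hdiff, hdist⟩ := construct ρ hρ σ hσ hne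
      have hε'pos : 0 < (1/2) * traceNorm (ρ - σ) := by
        have := traceNorm_pos (X := ρ - σ) (sub_ne_zero.mpr hne)
        linarith
      set ε' := (1/2) * traceNorm (ρ - σ) with hε'def
      have hε'le : ε' ≤ ε := hεle
      have hsε' : 0 < 1 - s + ε' := by linarith
      set p := ε' / (1 - s + ε') with hpdef
      have hp0 : 0 ≤ p := le_of_lt (div_pos hε'pos hsε')
      have hp1 : p < 1 := by rw [hpdef, div_lt_one hsε']; linarith
      have h1p : 0 < 1 - p := by linarith
      have hppε : p ≤ pε := by
        rw [hpdef, hpεdef, div_le_div_iff₀ hsε' hsε]; nlinarith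
      have hpk : p * ((1 - s) / ε') = 1 - p := by
        rw [hpdef]; field_simp; ring
      have h2 : p • (σp - σm) = (1 - p) • (ρ - σ) := by
        rw [hdiff, smul_smul, hpk]
      have hωeq : p • σm + (1 - p) • ρ = p • σp + (1 - p) • σ := by
        have h3 : p • σm + (1 - p) • ρ - (p • σp + (1 - p) • σ)
            = (1 - p) • (ρ - σ) - p • (σp - σm) := by module
        rw [h2, sub_self] at h3
        exact sub_eq_zero.mp h3
      have hpmem : p ∈ Set.Icc (0:ℝ) 1 := ⟨hp0, le_of_lt hp1⟩
      have hppos : 0 < p := div_pos hε'pos hsε'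
      have hfrac : p / (1 - p) = ε' / (1 - s) := by
        rw [← hpk, div_mul_cancel_left₀ (ne_of_gt hppos), inv_div]
      have hmem : (a p + b p) / (1 - p) ∈ S := ⟨p, ⟨hp0, hppε⟩, rfl⟩
      clear_value p ε' pε
      clear hpdef hε'def hpεdef hdiff h2 hpk
      obtain ⟨hX1l, hX1u⟩ := halaff p hpmem σm hσmm ρ hρ
      obtain ⟨hX2l, hX2u⟩ := halaff p hpmem σp hσpm σ hσ
      rw [hωeq] at hX1l hX1u
      have hCb := abs_le.mp (hC _ hσpm _ hσmm hdist)
      have h6 : p * (f σp - f σm) ≤ p * C := mul_le_mul_of_nonneg_left hCb.2 hp0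
      have h7 : p * (-C) ≤ p * (f σp - f σm) := mul_le_mul_of_nonneg_left hCb.1 hp0
      have hr1 : p * (f σp - f σm) = p * f σp - p * f σm := by ring
      have hup : (f ρ - f σ) * (1 - p) ≤ (a p + b p) + p * C := by
        nlinarith [hX1l, hX2u, h6, hr1]
      have hlo : -((a p + b p) + p * C) ≤ (f ρ - f σ) * (1 - p) := by
        nlinarith [hX1u, hX2l, h7, hr1]
      have habs : |f ρ - f σ| ≤ ((a p + b p) + p * C) / (1 - p) := by
        rw [abs_le]
        constructor
        · rw [neg_le, le_div_iff₀ h1p]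
          linarith
        · rw [le_div_iff₀ h1p]
          linarith
      have hsupS : (a p + b p) / (1 - p) ≤ sSup S := le_csSup hbdd hmem
      have hsplit : ((a p + b p) + p * C) / (1 - p)
          = (a p + b p) / (1 - p) + (p / (1 - p)) * C := by ring
      have hCfrac : (p / (1 - p)) * C ≤ C * ε / (1 - s) := by
        rw [hfrac]
        have h10 : ε' / (1 - s) * C ≤ ε / (1 - s) * C :=
          mul_le_mul_of_nonneg_right (by gcongr) hC0
        have h11 : C * ε / (1 - s) = ε / (1 - s) * C := by ring
        linarith
      calc |f ρ - f σ| ≤ ((a p + b p) + p * C) / (1 - p) := habs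
        _ = (a p + b p) / (1 - p) + (p / (1 - p)) * C := hsplit
        _ ≤ sSup S + C * ε / (1 - s) := add_le_add hsupS hCfrac
        _ = C * ε / (1 - s) + sSup S := by ring
  refine ⟨main, ?_⟩
  intro δ hδ
  have hgc2 : ContinuousOn (fun t => (a t + b t) / (1 - t)) (Set.Icc 0 (1/2)) := by
    have hsub : Set.Icc (0:ℝ) (1/2) ⊆ Set.Icc 0 1 := Set.Icc_subset_Icc le_rfl (by norm_num)
    exact ((haC.mono hsub).add (hbC.mono hsub)).div
      (continuousOn_const.sub continuousOn_id)
      (fun t ht => by intro h; have := ht.2; linarith)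
  have hcw : ContinuousWithinAt (fun t => (a t + b t) / (1 - t)) (Set.Icc 0 (1/2)) 0 :=
    hgc2 0 ⟨le_rfl, by norm_num⟩
  obtain ⟨u, hu, hball⟩ := Metric.continuousWithinAt_iff.mp hcw (δ/4) (by linarith)
  set ε := min 1 (min (min (u/2) (1/2) * (1-s)) ((δ/4) * (1-s) / (C+1))) with hεdef
  have hεpos : 0 < ε := by
    apply lt_min (by norm_num)
    apply lt_min
    · apply mul_pos (lt_min (by linarith) (by norm_num)) hs'
    · apply div_pos (by positivity) (by linarith)
  refine ⟨ε, hεpos, ?_⟩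
  intro ρ hρ σ hσ htn
  have hε1 : ε ≤ 1 := min_le_left _ _
  have h2 : (1/2) * traceNorm (ρ - σ) ≤ ε := by linarith
  have hb1 := main ε hεpos hε1 ρ hρ σ hσ h2
  rw [hEmaxgen ε hεpos] at hb1
  have hsε : 0 < 1 - s + ε := by linarith
  -- bound the C-term
  have hεC : ε ≤ (δ/4) * (1-s) / (C+1) := le_trans (min_le_right _ _) (min_le_right _ _)
  have hterm1 : C * ε / (1 - s) ≤ δ/4 := by
    rw [div_le_iff₀ hs']
    have h8 : C * ε ≤ C * ((δ/4) * (1-s) / (C+1)) := mul_le_mul_of_nonneg_left hεC hC0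
    have h9 : C * ((δ/4) * (1-s) / (C+1)) ≤ (δ/4) * (1-s) := by
      rw [mul_div_assoc']
      rw [div_le_iff₀ (by linarith : (0:ℝ) < C + 1)]
      nlinarith
    linarith
  -- bound the sSup term
  have hεu : ε ≤ min (u/2) (1/2) * (1-s) := le_trans (min_le_right _ _) (min_le_left _ _)
  have hpεle : ε / (1 - s + ε) ≤ min (u/2) (1/2) := by
    rw [div_le_iff₀ hsε]
    nlinarith [min_le_left (u/2) (1/2), min_le_right (u/2) (1/2)]
  have hterm2 : sSup ((fun t => (a t + b t) / (1 - t)) '' Set.Icc 0 (ε / (1 - s + ε))) ≤ δ/4 := by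
    apply csSup_le
    · exact ⟨(a 0 + b 0) / (1 - 0), ⟨0, ⟨le_rfl, le_of_lt (div_pos hεpos hsε)⟩, rfl⟩⟩
    · rintro x ⟨t, ⟨ht0, htle⟩, rfl⟩
      have htu : t ≤ min (u/2) (1/2) := le_trans htle hpεle
      have ht12 : t ∈ Set.Icc (0:ℝ) (1/2) := ⟨ht0, le_trans htu (min_le_right _ _)⟩
      have htd : dist t 0 < u := by
        rw [Real.dist_eq, sub_zero, abs_of_nonneg ht0]
        have := le_trans htu (min_le_left _ _)
        linarith
      have := hball ht12 htd
      rw [Real.dist_eq] at this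
      have h0 : (a 0 + b 0) / (1 - (0:ℝ)) = 0 := by simp [ha0, hb0]
      rw [h0, sub_zero] at this
      exact le_of_lt (lt_of_le_of_lt (le_abs_self _) this)
  linarith

end QPaper
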